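/- For every natural number k, the number of vertices labeled k+1 in the action graph A_{k+1} (equivalently, the number of vertices adjoined when building A_{k+1} from A_k, which also equals the number of edges adjoined) is the (k+1)st Catalan number C_{k+1}. -/

import Mathlib

/-- Vertices of action graphs: the root (labeled 0), or a vertex created at some
step, recorded together with its label and the path (head and tail of the vertex
sequence) that created it. -/
inductive AGVert : Type
  | root : AGVert
  | node (lbl : ℕ) (head : AGVert) (tail : List AGVert) : AGVert

/-- The label of a vertex. -/
def AGVert.label : AGVert → ℕ
  | .root => 0
  | .node l _ _ => l

/-- `IsPath E a l` says that `a :: l` is the vertex sequence of a directed path in a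
graph with edge set `E` (the trivial path at `a` when `l = []`). -/
def IsPath (E : Set (AGVert × AGVert)) (a : AGVert) (l : List AGVert) : Prop :=
  List.Chain (fun x y => (x, y) ∈ E) a l

/-- The terminal vertex of the path with vertex sequence `a :: l`. -/
def pathLast (a : AGVert) (l : List AGVert) : AGVert :=
  (a :: l).getLast (List.cons_ne_nil a l)

/-- The action graph `A k`, given by its set of vertices together with its set of
(nontrivial, directed) edges.  `A 0` has one vertex (labeled 0) and no nontrivial
edges; `A (k+1)` is obtained from `A k` by adjoining, for each directed path
(including trivial ones) in `A k` whose terminal vertex is labeled `k`, a new vertex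
labeled `k+1` and a new edge from the initial vertex of the path to the new vertex. -/
def actionGraph : ℕ → Set AGVert × Set (AGVert × AGVert)
  | 0 => ({AGVert.root}, ∅)
  | k + 1 =>
    let G := actionGraph k
    (G.1 ∪ { w | ∃ a l, a ∈ G.1 ∧ IsPath G.2 a l ∧ (pathLast a l).label = k ∧
        w = AGVert.node (k + 1) a l },
     G.2 ∪ { e | ∃ a l, a ∈ G.1 ∧ IsPath G.2 a l ∧ (pathLast a l).label = k ∧
        e = (a, AGVert.node (k + 1) a l) })

namespace AGHelp

abbrev V (k : ℕ) : Set AGVert := (actionGraph k).1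

lemma chain_cons' {α : Type*} {R : α → α → Prop} {a b : α} {l : List α} :
    List.Chain R a (b :: l) ↔ R a b ∧ List.Chain R b l := List.isChain_cons_cons

lemma chain_split' {α : Type*} {R : α → α → Prop} {a b : α} {l₁ l₂ : List α} :
    List.Chain R a (l₁ ++ b :: l₂) ↔ List.Chain R a (l₁ ++ [b]) ∧ List.Chain R b l₂ :=
  List.isChain_cons_split

lemma chain_map' {α β : Type*} {R : α → α → Prop} (f : β → α) {b : β} {l : List β} :
    List.Chain R (f b) (l.map f) ↔ List.Chain (fun a b => R (f a) (f b)) b l :=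
  List.isChain_map f (l := b :: l)
abbrev E (k : ℕ) : Set (AGVert × AGVert) := (actionGraph k).2

lemma mem_V_succ {k : ℕ} {v : AGVert} :
    v ∈ V (k+1) ↔ v ∈ V k ∨ ∃ a l, a ∈ V k ∧ IsPath (E k) a l ∧
      (pathLast a l).label = k ∧ v = AGVert.node (k+1) a l := Iff.rfl

lemma mem_E_succ {k : ℕ} {e : AGVert × AGVert} :
    e ∈ E (k+1) ↔ e ∈ E k ∨ ∃ a l, a ∈ V k ∧ IsPath (E k) a l ∧
      (pathLast a l).label = k ∧ e = (a, AGVert.node (k+1) a l) := Iff.rfl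

lemma mem_V_zero {v : AGVert} : v ∈ V 0 ↔ v = AGVert.root := by
  simp [V, actionGraph]

lemma not_mem_E_zero (e : AGVert × AGVert) : e ∉ E 0 := by
  simp [E, actionGraph]

lemma root_mem_V (k : ℕ) : AGVert.root ∈ V k := by
  induction k with
  | zero => simp [mem_V_zero]
  | succ k ih => exact mem_V_succ.2 (Or.inl ih)

lemma label_le {k : ℕ} {v : AGVert} (h : v ∈ V k) : v.label ≤ k := by
  induction k with
  | zero => rw [mem_V_zero] at h; subst h; exact le_rfl
  | succ k ih =>
    rcases mem_V_succ.1 h with h | ⟨a, l, _, _, _, rfl⟩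
    · exact (ih h).trans (Nat.le_succ k)
    · exact le_rfl

lemma V_mono {k : ℕ} : V k ⊆ V (k+1) := fun _ h => mem_V_succ.2 (Or.inl h)
lemma E_mono {k : ℕ} : E k ⊆ E (k+1) := fun _ h => mem_E_succ.2 (Or.inl h)

/-- depth in the head-chain -/
def dep : AGVert → ℕ
  | .root => 0
  | .node _ a _ => dep a + 1

lemma edge_shape {k : ℕ} {x y : AGVert} (h : (x, y) ∈ E k) :
    (∃ j l, y = AGVert.node j x l) ∧ x ∈ V k ∧ y ∈ V k := by
  induction k with
  | zero => exact absurd h (not_mem_E_zero _)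
  | succ k ih =>
    rcases mem_E_succ.1 h with h | ⟨a, l, ha, hp, hl, he⟩
    · obtain ⟨hs, hx, hy⟩ := ih h
      exact ⟨hs, V_mono hx, V_mono hy⟩
    · obtain ⟨rfl, rfl⟩ := Prod.mk.injEq .. ▸ he
      exact ⟨⟨k+1, l, rfl⟩, V_mono ha,
        mem_V_succ.2 (Or.inr ⟨x, l, ha, hp, hl, rfl⟩)⟩

lemma edge_dep {k : ℕ} {x y : AGVert} (h : (x, y) ∈ E k) : dep y = dep x + 1 := by
  obtain ⟨⟨j, l, rfl⟩, -, -⟩ := edge_shape h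
  rfl

lemma edge_target_label {k : ℕ} {x y : AGVert} (h : (x, y) ∈ E k) : 1 ≤ y.label ∧ y.label ≤ k := by
  induction k with
  | zero => exact absurd h (not_mem_E_zero _)
  | succ k ih =>
    rcases mem_E_succ.1 h with h | ⟨a, l, _, _, _, he⟩
    · exact ⟨(ih h).1, (ih h).2.trans (Nat.le_succ k)⟩
    · obtain ⟨rfl, rfl⟩ := Prod.mk.injEq .. ▸ he
      exact ⟨Nat.succ_le_succ (Nat.zero_le _), le_rfl⟩

lemma edge_of_node {k : ℕ} {j : ℕ} {x : AGVert} {t : List AGVert}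
    (h : AGVert.node j x t ∈ V k) : (x, AGVert.node j x t) ∈ E k ∧ x ∈ V k := by
  induction k with
  | zero => rw [mem_V_zero] at h; exact absurd h (by simp)
  | succ k ih =>
    rcases mem_V_succ.1 h with h | ⟨a, l, ha, hp, hl, he⟩
    · exact ⟨E_mono (ih h).1, V_mono (ih h).2⟩
    · obtain ⟨rfl, rfl, rfl⟩ : j = k + 1 ∧ x = a ∧ t = l := by
        injection he with h1 h2 h3; exact ⟨h1, h2, h3⟩
      exact ⟨mem_E_succ.2 (Or.inr ⟨x, t, ha, hp, hl, rfl⟩), V_mono ha⟩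

lemma pathLast_nil (a : AGVert) : pathLast a [] = a := rfl

lemma pathLast_cons (a y : AGVert) (l : List AGVert) :
    pathLast a (y :: l) = pathLast y l := by
  simp [pathLast, List.getLast_cons]

lemma pathLast_concat (a y : AGVert) (t : List AGVert) :
    pathLast a (t ++ [y]) = y := by
  simp [pathLast]

lemma isPath_nil {S : Set (AGVert × AGVert)} {a : AGVert} : IsPath S a [] := List.Chain.nil

lemma isPath_concat {S : Set (AGVert × AGVert)} {a y : AGVert} {t : List AGVert} :
    IsPath S a (t ++ [y]) ↔ IsPath S a t ∧ (pathLast a t, y) ∈ S := by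
  induction t generalizing a with
  | nil => simp [IsPath, pathLast_nil, List.Chain]
  | cons b t ih =>
    simp only [List.cons_append, IsPath, chain_cons'] at *
    rw [pathLast_cons]
    constructor
    · rintro ⟨h1, h2⟩
      obtain ⟨h3, h4⟩ := ih.1 h2
      exact ⟨⟨h1, h3⟩, h4⟩
    · rintro ⟨⟨h1, h3⟩, h4⟩
      exact ⟨h1, ih.2 ⟨h3, h4⟩⟩

lemma pathLast_mem {k : ℕ} {a : AGVert} {l : List AGVert}
    (ha : a ∈ V k) (h : IsPath (E k) a l) : pathLast a l ∈ V k := by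
  induction l generalizing a with
  | nil => exact ha
  | cons y l ih =>
    rw [IsPath, chain_cons'] at h
    rw [pathLast_cons]
    exact ih (edge_shape h.1).2.2 h.2

lemma dep_pathLast {k : ℕ} {a : AGVert} {l : List AGVert}
    (h : IsPath (E k) a l) : dep (pathLast a l) = dep a + l.length := by
  induction l generalizing a with
  | nil => rfl
  | cons y l ih =>
    rw [IsPath, chain_cons'] at h
    rw [pathLast_cons, ih h.2, edge_dep h.1, List.length_cons]
    omega

/-- the ancestor at distance `m` together with the chain down from it (exclusive) -/
def anc : AGVert → ℕ → AGVert × List AGVert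
  | v, 0 => (v, [])
  | .root, _+1 => (.root, [])
  | .node j a l, m+1 => ((anc a m).1, (anc a m).2 ++ [AGVert.node j a l])

@[simp] lemma anc_zero (v : AGVert) : anc v 0 = (v, []) := by cases v <;> rfl

lemma anc_node (j : ℕ) (a : AGVert) (l : List AGVert) (m : ℕ) :
    anc (AGVert.node j a l) (m+1) = ((anc a m).1, (anc a m).2 ++ [AGVert.node j a l]) := rfl

lemma anc_spec {k : ℕ} {v : AGVert} (m : ℕ) (hv : v ∈ V k) (hm : m ≤ dep v) :
    (anc v m).1 ∈ V k ∧ IsPath (E k) (anc v m).1 (anc v m).2 ∧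
      pathLast (anc v m).1 (anc v m).2 = v ∧ dep (anc v m).1 + m = dep v ∧
      (anc v m).2.length = m := by
  induction m generalizing v with
  | zero => rw [anc_zero]; exact ⟨hv, isPath_nil, pathLast_nil v, by simp, rfl⟩
  | succ m ih =>
    match v with
    | .root => simp [dep] at hm
    | .node j a l =>
      obtain ⟨he, ha⟩ := edge_of_node hv
      have hm' : m ≤ dep a := by simp [dep] at hm; omega
      obtain ⟨h1, h2, h3, h4, h5⟩ := ih ha hm'
      refine ⟨h1, ?_, ?_, ?_, ?_⟩
      · show IsPath (E k) (anc a m).1 ((anc a m).2 ++ [AGVert.node j a l])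
        rw [isPath_concat, h3]
        exact ⟨h2, he⟩
      · exact pathLast_concat _ _ _
      · show dep (anc a m).1 + (m + 1) = dep (AGVert.node j a l)
        simp [dep]; omega
      · show ((anc a m).2 ++ [AGVert.node j a l]).length = m + 1
        simp [h5]

lemma path_eq_anc {k : ℕ} {a : AGVert} {l : List AGVert}
    (h : IsPath (E k) a l) : (a, l) = anc (pathLast a l) l.length := by
  induction l using List.reverseRecOn generalizing a with
  | nil => simp [pathLast_nil]
  | append_singleton t y ih =>
    rw [isPath_concat] at h
    obtain ⟨hp, he⟩ := h
    obtain ⟨⟨j, l', rfl⟩, -, -⟩ := edge_shape he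
    rw [pathLast_concat]
    have : (t ++ [AGVert.node j (pathLast a t) l']).length = t.length + 1 := by simp
    rw [this]
    show (a, t ++ [AGVert.node j (pathLast a t) l']) =
      ((anc (pathLast a t) t.length).1,
        (anc (pathLast a t) t.length).2 ++ [AGVert.node j (pathLast a t) l'])
    rw [← ih hp]

/-- the depth sequence associated to a vertex -/
def toSeq : AGVert → List ℕ
  | .root => []
  | .node _ a l => toSeq (pathLast a l) ++ [dep a + 1]
  termination_by v => sizeOf v
  decreasing_by
    simp_wf
    have h2 := List.sizeOf_lt_of_mem (List.getLast_mem (List.cons_ne_nil a l))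
    simp [pathLast] at h2 ⊢
    omega

lemma toSeq_node (j : ℕ) (a : AGVert) (l : List AGVert) :
    toSeq (AGVert.node j a l) = toSeq (pathLast a l) ++ [dep a + 1] := by
  rw [toSeq]

end AGHelp

namespace AGHelp

/-- valid depth sequences: start at 1, increase by at most one, stay ≥ 1 -/
def Valid (s : List ℕ) : Prop := List.Chain (fun x y => 1 ≤ y ∧ y ≤ x + 1) 0 s

lemma chain_concat {α : Type*} {Rel : α → α → Prop} {x : α} {s : List α} {e : α} :
    List.Chain Rel x (s ++ [e]) ↔ List.Chain Rel x s ∧ Rel (s.getLastD x) e := by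
  induction s generalizing x with
  | nil => simp [List.Chain]
  | cons b t ih =>
    rw [List.cons_append, chain_cons', chain_cons', ih, List.getLastD_cons, and_assoc]

lemma valid_concat {s : List ℕ} {e : ℕ} :
    Valid (s ++ [e]) ↔ Valid s ∧ (1 ≤ e ∧ e ≤ s.getLastD 0 + 1) := by
  rw [Valid, chain_concat]; rfl

lemma chain_one_le : ∀ {x : ℕ} {s : List ℕ},
    List.Chain (fun x y => 1 ≤ y ∧ y ≤ x + 1) x s → ∀ y ∈ s, 1 ≤ y := by
  intro x s h
  induction s generalizing x with
  | nil => simp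
  | cons b t ih =>
    rw [chain_cons'] at h
    intro y hy
    rcases List.mem_cons.1 hy with rfl | hy
    · exact h.1.1
    · exact ih h.2 y hy

lemma valid_one_le {s : List ℕ} (h : Valid s) : ∀ x ∈ s, 1 ≤ x := chain_one_le h

def seqs : ℕ → Finset (List ℕ)
  | 0 => {[]}
  | k+1 => (seqs k).biUnion fun s => (Finset.range (s.getLastD 0 + 1)).image fun e => s ++ [e+1]

lemma mem_seqs {k : ℕ} {s : List ℕ} : s ∈ seqs k ↔ Valid s ∧ s.length = k := by
  induction k generalizing s with
  | zero =>
    simp only [seqs, Finset.mem_singleton, List.length_eq_zero_iff]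
    constructor
    · rintro rfl; exact ⟨List.Chain.nil, rfl⟩
    · rintro ⟨-, rfl⟩; rfl
  | succ k ih =>
    simp only [seqs, Finset.mem_biUnion, Finset.mem_image, Finset.mem_range]
    constructor
    · rintro ⟨t, ht, e, he, rfl⟩
      obtain ⟨hv, hl⟩ := ih.1 ht
      refine ⟨valid_concat.2 ⟨hv, by omega, by omega⟩, by simp [hl]⟩
    · rintro ⟨hv, hl⟩
      rcases s.eq_nil_or_concat' with rfl | ⟨t, y, rfl⟩
      · simp at hl
      · obtain ⟨hvt, h1, h2⟩ := valid_concat.1 hv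
        have h1' : 1 ≤ y := h1
        have h2' : y ≤ t.getLastD 0 + 1 := h2
        have hy : y - 1 < t.getLastD 0 + 1 := Nat.lt_succ_of_le (Nat.sub_le_of_le_add h2)
        have heq : t ++ [y - 1 + 1] = t ++ [y] := by rw [Nat.sub_add_cancel h1]
        exact ⟨t, ih.2 ⟨hvt, by simp at hl; omega⟩, y - 1, hy, heq⟩

lemma append_one_inj : ∀ {a c b d : List ℕ}, (∀ x ∈ b, x ≠ 1) → (∀ x ∈ d, x ≠ 1) →
    a ++ 1 :: b = c ++ 1 :: d → a = c ∧ b = d := by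
  intro a
  induction a with
  | nil =>
    intro c b d hb hd h
    cases c with
    | nil => simpa using h
    | cons z c =>
      simp only [List.nil_append, List.cons_append, List.cons.injEq] at h
      exact absurd (hb 1 (h.2 ▸ by simp)) (by simp)
  | cons z a ih =>
    intro c b d hb hd h
    cases c with
    | nil =>
      simp only [List.nil_append, List.cons_append, List.cons.injEq] at h
      exact absurd (hd 1 (h.2.symm ▸ by simp)) (by simp)
    | cons w c =>
      simp only [List.cons_append, List.cons.injEq] at h
      obtain ⟨rfl, h⟩ := h
      obtain ⟨rfl, rfl⟩ := ih hb hd h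
      exact ⟨rfl, rfl⟩

lemma valid_shift {b : List ℕ} (h : Valid b) :
    List.Chain (fun x y => 1 ≤ y ∧ y ≤ x + 1) 1 (b.map (· + 1)) := by
  have hm := chain_map' (R := fun x y : ℕ => 1 ≤ y ∧ y ≤ x + 1)
    (fun x : ℕ => x + 1) (b := 0) (l := b)
  exact hm.2 (List.Chain.imp (fun x y hxy => ⟨by omega, by omega⟩) h)

lemma valid_glue {a b : List ℕ} (ha : Valid a) (hb : Valid b) :
    Valid (a ++ 1 :: b.map (· + 1)) := by
  rw [Valid, chain_split']
  exact ⟨valid_concat.2 ⟨ha, le_rfl, by omega⟩, valid_shift hb⟩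

lemma getLastD_append_cons (a : List ℕ) (x : ℕ) (c : List ℕ) :
    ∀ d, (a ++ x :: c).getLastD d = c.getLastD x := by
  induction a with
  | nil => intro d; rw [List.nil_append, List.getLastD_cons]
  | cons y a ih => intro d; rw [List.cons_append, List.getLastD_cons, ih]

lemma getLastD_map_succ (b : List ℕ) (d : ℕ) :
    (b.map (· + 1)).getLastD (d + 1) = b.getLastD d + 1 := by
  rcases b.eq_nil_or_concat' with rfl | ⟨b₀, z, rfl⟩
  · simp
  · simp only [List.map_append, List.map_cons, List.map_nil]
    rw [List.getLastD_concat, List.getLastD_concat]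

lemma getLastD_glue (a b : List ℕ) :
    (a ++ 1 :: b.map (· + 1)).getLastD 0 = b.getLastD 0 + 1 := by
  rw [getLastD_append_cons]
  exact getLastD_map_succ b 0

lemma mem_seqs_succ {k : ℕ} {s : List ℕ} :
    s ∈ seqs (k+1) ↔ ∃ t ∈ seqs k, ∃ e < t.getLastD 0 + 1, s = t ++ [e+1] := by
  have : seqs (k+1)
      = (seqs k).biUnion fun t => (Finset.range (t.getLastD 0 + 1)).image fun e => t ++ [e+1] :=
    rfl
  rw [this]
  simp only [Finset.mem_biUnion, Finset.mem_image, Finset.mem_range]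
  constructor
  · rintro ⟨t, ht, e, he, rfl⟩; exact ⟨t, ht, e, he, rfl⟩
  · rintro ⟨t, ht, e, he, rfl⟩; exact ⟨t, ht, e, he, rfl⟩

lemma seqs_decomp : ∀ k, ∀ s ∈ seqs (k+1), ∃ i, i ≤ k ∧ ∃ a ∈ seqs i, ∃ b ∈ seqs (k - i),
    s = a ++ 1 :: b.map (· + 1) := by
  intro k
  induction k with
  | zero =>
    intro s hs
    obtain ⟨t, ht, e, he, rfl⟩ := mem_seqs_succ.1 hs
    obtain ⟨-, hlt⟩ := mem_seqs.1 ht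
    have ht0 : t = [] := List.length_eq_zero_iff.1 hlt
    subst ht0
    simp only [List.getLastD_nil] at he
    have he0 : e = 0 := by omega
    subst he0
    exact ⟨0, le_rfl, [], by simp [seqs], [], by simp [seqs], rfl⟩
  | succ k ih =>
    intro s hs
    obtain ⟨t, ht, e, he, rfl⟩ := mem_seqs_succ.1 hs
    match e with
    | 0 =>
      exact ⟨k + 1, le_rfl, t, ht, [], by simp [seqs], by simp⟩
    | e + 1 =>
      obtain ⟨i, hik, a, hamem, b, hb, rfl⟩ := ih t ht
      rw [getLastD_glue] at he
      obtain ⟨hvb, hlb⟩ := mem_seqs.1 hb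
      have hb' : b ++ [e + 1] ∈ seqs (k + 1 - i) := by
        rw [mem_seqs]
        refine ⟨valid_concat.2 ⟨hvb, by omega, by omega⟩, ?_⟩
        simp [hlb]; omega
      refine ⟨i, by omega, a, hamem, b ++ [e + 1], hb', ?_⟩
      simp [List.map_append]

lemma card_seqs_succ (k : ℕ) :
    (seqs (k+1)).card = ∑ i ∈ Finset.range (k+1), (seqs i).card * (seqs (k-i)).card := by
  have h1 : ∑ i ∈ Finset.range (k+1), (seqs i).card * (seqs (k-i)).card
      = ((Finset.range (k+1)).sigma (fun i => seqs i ×ˢ seqs (k-i))).card := by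
    rw [Finset.card_sigma]
    exact Finset.sum_congr rfl fun i _ => (Finset.card_product _ _).symm
  rw [h1]
  refine (Finset.card_bij (fun p _ => p.2.1 ++ 1 :: p.2.2.map (· + 1)) ?_ ?_ ?_).symm
  · rintro ⟨i, a, b⟩ hp
    simp only [Finset.mem_sigma, Finset.mem_range, Finset.mem_product] at hp
    obtain ⟨hi, ha, hb⟩ := hp
    obtain ⟨hva, hla⟩ := mem_seqs.1 ha
    obtain ⟨hvb, hlb⟩ := mem_seqs.1 hb
    rw [mem_seqs]
    refine ⟨valid_glue hva hvb, ?_⟩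
    simp [hla, hlb]; omega
  · rintro ⟨i, a, b⟩ hp ⟨i', a', b'⟩ hq h
    simp only [Finset.mem_sigma, Finset.mem_range, Finset.mem_product] at hp hq
    obtain ⟨hi, ha, hb⟩ := hp
    obtain ⟨hi', ha', hb'⟩ := hq
    have hav : Valid a ∧ a.length = i := mem_seqs.1 ha
    have hav' : Valid a' ∧ a'.length = i' := mem_seqs.1 ha'
    have hbv : Valid b ∧ b.length = k - i := mem_seqs.1 hb
    have hbv' : Valid b' ∧ b'.length = k - i' := mem_seqs.1 hb'
    have hnb : ∀ x ∈ b.map (· + 1), x ≠ 1 := by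
      intro x hx
      obtain ⟨y, hy, rfl⟩ := List.mem_map.1 hx
      have h1y := valid_one_le hbv.1 y hy
      show y + 1 ≠ 1
      omega
    have hnb' : ∀ x ∈ b'.map (· + 1), x ≠ 1 := by
      intro x hx
      obtain ⟨y, hy, rfl⟩ := List.mem_map.1 hx
      have h1y := valid_one_le hbv'.1 y hy
      show y + 1 ≠ 1
      omega
    have h' : a ++ 1 :: b.map (· + 1) = a' ++ 1 :: b'.map (· + 1) := h
    obtain ⟨hac, hbd⟩ := append_one_inj hnb hnb' h'
    have hbb : b = b' := by
      have hinj : Function.Injective ((· + 1) : ℕ → ℕ) := add_left_injective 1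
      exact List.map_injective_iff.2 hinj hbd
    have hii : i = i' := by rw [← hav.2, ← hav'.2, hac]
    subst hii; subst hac; subst hbb; rfl
  · intro s hs
    obtain ⟨i, hik, a, ha, b, hb, rfl⟩ := seqs_decomp k s hs
    refine ⟨⟨i, a, b⟩, ?_, rfl⟩
    simp only [Finset.mem_sigma, Finset.mem_range, Finset.mem_product]
    exact ⟨by omega, ha, hb⟩

lemma card_seqs (k : ℕ) : (seqs k).card = catalan k := by
  induction k using Nat.strong_induction_on with
  | _ k ihs =>
    match k with
    | 0 => simp [seqs]
    | k + 1 =>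
      rw [card_seqs_succ, catalan_succ,
        Fin.sum_univ_eq_sum_range (fun i => catalan i * catalan (k - i)) (k+1)]
      refine Finset.sum_congr rfl fun i hi => ?_
      rw [Finset.mem_range] at hi
      rw [ihs i (by omega), ihs (k - i) (by omega)]

end AGHelp

namespace AGHelp

lemma toSeq_root : toSeq AGVert.root = [] := by rw [toSeq]

lemma dep_node (j : ℕ) (a : AGVert) (l : List AGVert) :
    dep (AGVert.node j a l) = dep a + 1 := rfl

/-- the set of vertices labeled `k` in `A k` -/
def W (k : ℕ) : Set AGVert := {v | v ∈ V k ∧ v.label = k}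

lemma W_succ_shape {k : ℕ} {v : AGVert} (hv : v ∈ W (k+1)) :
    ∃ a l, a ∈ V k ∧ IsPath (E k) a l ∧ pathLast a l ∈ W k ∧
      v = AGVert.node (k+1) a l := by
  obtain ⟨hm, hl⟩ := hv
  rcases mem_V_succ.1 hm with h | ⟨a, l, ha, hp, hlab, rfl⟩
  · have := label_le h; omega
  · exact ⟨a, l, ha, hp, ⟨pathLast_mem ha hp, hlab⟩, rfl⟩

lemma main (k : ℕ) :
    (∀ v ∈ W k, toSeq v ∈ seqs k ∧ (toSeq v).getLastD 0 = dep v)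
    ∧ (∀ v ∈ W k, ∀ v' ∈ W k, toSeq v = toSeq v' → v = v')
    ∧ (∀ s ∈ seqs k, ∃ v ∈ W k, toSeq v = s) := by
  induction k with
  | zero =>
    refine ⟨?_, ?_, ?_⟩
    · rintro v ⟨hm, -⟩
      rw [mem_V_zero] at hm
      subst hm
      rw [toSeq_root]
      exact ⟨by simp [seqs], rfl⟩
    · rintro v ⟨hm, -⟩ v' ⟨hm', -⟩ -
      rw [mem_V_zero] at hm hm'
      rw [hm, hm']
    · intro s hs
      obtain ⟨-, hl⟩ := mem_seqs.1 hs
      have : s = [] := List.length_eq_zero_iff.1 hl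
      subst this
      exact ⟨AGVert.root, ⟨mem_V_zero.2 rfl, rfl⟩, toSeq_root⟩
  | succ k ih =>
    obtain ⟨ihA, ihB, ihC⟩ := ih
    refine ⟨?_, ?_, ?_⟩
    · intro v hv
      obtain ⟨a, l, ha, hp, hu, rfl⟩ := W_succ_shape hv
      obtain ⟨hus, hud⟩ := ihA _ hu
      obtain ⟨huv, hul⟩ := mem_seqs.1 hus
      have hdep : dep (pathLast a l) = dep a + l.length := dep_pathLast hp
      rw [toSeq_node]
      constructor
      · rw [mem_seqs]
        refine ⟨valid_concat.2 ⟨huv, by omega, by rw [hud]; omega⟩, by simp [hul]⟩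
      · rw [List.getLastD_concat, dep_node]
    · intro v hv v' hv'
      obtain ⟨a, l, ha, hp, hu, rfl⟩ := W_succ_shape hv
      obtain ⟨a', l', ha', hp', hu', rfl⟩ := W_succ_shape hv'
      intro h
      rw [toSeq_node, toSeq_node] at h
      have hlen : (toSeq (pathLast a l)).length = (toSeq (pathLast a' l')).length := by
        rw [(mem_seqs.1 (ihA _ hu).1).2, (mem_seqs.1 (ihA _ hu').1).2]
      obtain ⟨h1, h2⟩ := List.append_inj h hlen
      have huu : pathLast a l = pathLast a' l' := ihB _ hu _ hu' h1
      have hda : dep a = dep a' := by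
        have := List.cons.injEq (dep a + 1) [] (dep a' + 1) [] ▸ h2
        simp at h2
        omega
      have hll : l.length = l'.length := by
        have e1 := dep_pathLast hp
        have e2 := dep_pathLast hp'
        rw [huu] at e1
        omega
      have q1 := path_eq_anc hp
      have q2 := path_eq_anc hp'
      rw [huu, hll] at q1
      rw [← q2] at q1
      obtain ⟨rfl, rfl⟩ := Prod.mk.injEq .. ▸ q1
      rfl
    · intro s hs
      obtain ⟨t, ht, e, he, rfl⟩ := mem_seqs_succ.1 hs
      obtain ⟨u, hu, htu⟩ := ihC t ht
      subst htu
      have hud := (ihA _ hu).2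
      have hedep : e ≤ dep u := by omega
      obtain ⟨h1, h2, h3, h4, h5⟩ := anc_spec (dep u - e) hu.1 (by omega)
      refine ⟨AGVert.node (k+1) (anc u (dep u - e)).1 (anc u (dep u - e)).2, ?_, ?_⟩
      · refine ⟨mem_V_succ.2 (Or.inr ⟨_, _, h1, h2, by rw [h3]; exact hu.2, rfl⟩), rfl⟩
      · rw [toSeq_node, h3]
        have : dep (anc u (dep u - e)).1 = e := by omega
        rw [this]

end AGHelp

open AGHelp

/-- When building `A (k+1)` from `A k`, the number of vertices added and labeled `k+1`,
and likewise the number of edges added, is the `(k+1)`st Catalan number. -/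
theorem stmt_0 (k : ℕ) :
    {v : AGVert | v ∈ (actionGraph (k + 1)).1 ∧ v.label = k + 1}.ncard = catalan (k + 1) ∧
    {e : AGVert × AGVert | e ∈ (actionGraph (k + 1)).2 ∧ e ∉ (actionGraph k).2}.ncard =
      catalan (k + 1) := by
  obtain ⟨hA, hB, hC⟩ := AGHelp.main (k+1)
  have hW : (W (k+1)).ncard = catalan (k+1) := by
    have hinj : Set.InjOn toSeq (W (k+1)) := fun v hv v' hv' => hB v hv v' hv'
    have himg : toSeq '' W (k+1) = ↑(seqs (k+1)) := by
      ext s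
      constructor
      · rintro ⟨v, hv, rfl⟩
        exact Finset.mem_coe.2 (hA v hv).1
      · intro hs
        obtain ⟨v, hv, htv⟩ := hC s (Finset.mem_coe.1 hs)
        exact ⟨v, hv, htv⟩
    calc (W (k+1)).ncard = (toSeq '' W (k+1)).ncard := (Set.ncard_image_of_injOn hinj).symm
      _ = (↑(seqs (k+1)) : Set (List ℕ)).ncard := by rw [himg]
      _ = (seqs (k+1)).card := Set.ncard_coe_finset _
      _ = catalan (k+1) := card_seqs _
  constructor
  · exact hW
  · set S2 : Set (AGVert × AGVert) := {e | e ∈ E (k+1) ∧ e ∉ E k} with hS2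
    show S2.ncard = catalan (k+1)
    have hshape : ∀ e ∈ S2, ∃ a l, a ∈ V k ∧ IsPath (E k) a l ∧ (pathLast a l).label = k ∧
        e = (a, AGVert.node (k+1) a l) := by
      rintro e ⟨hmem, hnot⟩
      rcases mem_E_succ.1 hmem with h | h
      · exact absurd h hnot
      · exact h
    have hinj2 : Set.InjOn Prod.snd S2 := by
      intro e he e' he' h
      obtain ⟨a, l, -, -, -, rfl⟩ := hshape e he
      obtain ⟨a', l', -, -, -, rfl⟩ := hshape e' he'
      simp only [Prod.snd] at h
      obtain ⟨-, rfl, rfl⟩ : k + 1 = k + 1 ∧ a = a' ∧ l = l' := by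
        injection h with h1 h2 h3; exact ⟨h1, h2, h3⟩
      rfl
    have himg2 : Prod.snd '' S2 = W (k+1) := by
      ext v
      constructor
      · rintro ⟨e, he, rfl⟩
        obtain ⟨a, l, ha, hp, hl, rfl⟩ := hshape e he
        exact ⟨mem_V_succ.2 (Or.inr ⟨a, l, ha, hp, hl, rfl⟩), rfl⟩
      · intro hv
        obtain ⟨a, l, ha, hp, hu, rfl⟩ := W_succ_shape hv
        refine ⟨(a, AGVert.node (k+1) a l), ⟨?_, ?_⟩, rfl⟩
        · exact mem_E_succ.2 (Or.inr ⟨a, l, ha, hp, hu.2, rfl⟩)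
        · intro hmem
          have := (edge_target_label hmem).2
          simp [AGVert.label] at this
        
    calc S2.ncard = (Prod.snd '' S2).ncard := (Set.ncard_image_of_injOn hinj2).symm
      _ = (W (k+1)).ncard := by rw [himg2]
      _ = catalan (k+1) := hW
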